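/- arXiv:1001.3702 — 6 statements merged into one kernel-verified Lean document; each statement's English description precedes it below -/
import Mathlib

section
/- Any configuration of 5 distinct points on the unit sphere S² ⊂ ℝ³ contains two points at Euclidean distance at most √2 from each other. -/
open Finset

/-- Any configuration of 5 distinct points on the unit sphere S² ⊂ ℝ³ contains
two points at Euclidean distance at most √2 from each other. -/
theorem five_points_on_sphere_close_pair
    (p : Fin 5 → EuclideanSpace ℝ (Fin 3))
    (hsphere : ∀ i, ‖p i‖ = 1)
    (hdist : Function.Injective p) :
    ∃ i j, i ≠ j ∧ dist (p i) (p j) ≤ Real.sqrt 2 := by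
  by_contra hcon
  push_neg at hcon
  have hinner : ∀ i j, i ≠ j → (inner ℝ (p i) (p j) : ℝ) < 0 := by
    intro i j hij
    have h := hcon i j hij
    have hd : dist (p i) (p j) = ‖p i - p j‖ := dist_eq_norm _ _
    have hsq : ‖p i - p j‖ ^ 2 = ‖p i‖ ^ 2 - 2 * inner ℝ (p i) (p j) + ‖p j‖ ^ 2 :=
      norm_sub_sq_real (p i) (p j)
    rw [hsphere i, hsphere j] at hsq
    have h2 : Real.sqrt 2 ^ 2 = 2 := Real.sq_sqrt (by norm_num)
    nlinarith [Real.sqrt_nonneg 2, dist_nonneg (x := p i) (y := p j), hd]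
  set v : Fin 4 → EuclideanSpace ℝ (Fin 3) := fun i => p i.castSucc with hv
  have hdep : ¬ LinearIndependent ℝ v := by
    intro h
    have := h.fintype_card_le_finrank
    simp [finrank_euclideanSpace_fin] at this
  obtain ⟨c, hsum, i₀, hi₀⟩ := Fintype.not_linearIndependent_iff.mp hdep
  set P : Finset (Fin 4) := univ.filter (fun i => 0 < c i) with hP
  set N : Finset (Fin 4) := univ.filter (fun i => c i < 0) with hN
  have hvlt : ∀ i j : Fin 4, i ≠ j → (inner ℝ (v i) (v j) : ℝ) < 0 := by
    intro i j hij
    exact hinner _ _ (fun h => hij (Fin.castSucc_injective _ h))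
  have hv4 : ∀ i : Fin 4, (inner ℝ (v i) (p 4) : ℝ) < 0 := by
    intro i
    refine hinner _ _ ?_
    have := Fin.castSucc_lt_last i
    intro h
    rw [show (4 : Fin 5) = Fin.last 4 from rfl] at h
    exact absurd h (ne_of_lt this)
  have hsplit : ∑ i ∈ P, c i • v i + ∑ i ∈ N, c i • v i = 0 := by
    rw [← hsum]
    rw [← Finset.sum_filter_add_sum_filter_not univ (fun i => 0 < c i) (fun i => c i • v i)]
    congr 1
    apply Finset.sum_subset
    · intro x hx
      simp only [hN, mem_filter, mem_univ, true_and] at hx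
      simp only [mem_filter, mem_univ, true_and]
      exact not_lt.mpr (le_of_lt hx)
    · intro x hx hxN
      simp only [mem_filter, mem_univ, true_and, not_lt] at hx
      simp only [hN, mem_filter, mem_univ, true_and, not_lt] at hxN
      have : c x = 0 := le_antisymm hx hxN
      simp [this]
  have key : ∑ i ∈ P, c i • v i = ∑ j ∈ N, (-c j) • v j := by
    have h1 : ∑ i ∈ P, c i • v i = - ∑ j ∈ N, c j • v j :=
      eq_neg_of_add_eq_zero_left hsplit
    rw [h1, ← Finset.sum_neg_distrib]
    simp [neg_smul]
  rcases P.eq_empty_or_nonempty with hPe | hPne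
  · -- P empty
    have hNne : N.Nonempty := by
      refine ⟨i₀, ?_⟩
      simp only [hN, mem_filter, mem_univ, true_and]
      rcases lt_trichotomy (c i₀) 0 with h | h | h
      · exact h
      · exact absurd h hi₀
      · exact absurd (by simp [hP, mem_filter, h] : i₀ ∈ P) (by simp [hPe])
    have hz : (0 : EuclideanSpace ℝ (Fin 3)) = ∑ j ∈ N, (-c j) • v j := by
      rw [← key, hPe, Finset.sum_empty]
    have hlt : (inner ℝ (∑ j ∈ N, (-c j) • v j) (p 4) : ℝ) < 0 := by
      rw [sum_inner]
      refine Finset.sum_neg ?_ hNne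
      intro j hj
      simp only [hN, mem_filter, mem_univ, true_and] at hj
      rw [real_inner_smul_left]
      exact mul_neg_of_pos_of_neg (by linarith) (hv4 j)
    rw [← hz, inner_zero_left] at hlt
    exact lt_irrefl _ hlt
  rcases N.eq_empty_or_nonempty with hNe | hNne
  · -- N empty
    have hz : ∑ i ∈ P, c i • v i = 0 := by
      rw [key, hNe, Finset.sum_empty]
    have hlt : (inner ℝ (∑ i ∈ P, c i • v i) (p 4) : ℝ) < 0 := by
      rw [sum_inner]
      refine Finset.sum_neg ?_ hPne
      intro i hi
      simp only [hP, mem_filter, mem_univ, true_and] at hi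
      rw [real_inner_smul_left]
      exact mul_neg_of_pos_of_neg hi (hv4 i)
    rw [hz, inner_zero_left] at hlt
    exact lt_irrefl _ hlt
  · -- both nonempty
    have h0 : (0 : ℝ) ≤ inner ℝ (∑ i ∈ P, c i • v i) (∑ i ∈ P, c i • v i) :=
      real_inner_self_nonneg
    nth_rewrite 2 [key] at h0
    rw [sum_inner] at h0
    have hlt : ∑ i ∈ P, (inner ℝ (c i • v i) (∑ j ∈ N, (-c j) • v j) : ℝ) < 0 := by
      refine Finset.sum_neg ?_ hPne
      intro i hi
      simp only [hP, mem_filter, mem_univ, true_and] at hi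
      rw [inner_sum]
      refine Finset.sum_neg ?_ hNne
      intro j hj
      simp only [hN, mem_filter, mem_univ, true_and] at hj
      rw [real_inner_smul_left, real_inner_smul_right]
      have hij : i ≠ j := by rintro rfl; linarith
      exact mul_neg_of_pos_of_neg hi
        (mul_neg_of_pos_of_neg (neg_pos.mpr hj) (hvlt i j hij))
    linarith
end

section
/- Let A be an arc of a circle C of radius r, with arc length d, and let A' be the chord joining the endpoints of A. Then every point of A lies within distance d²/(8r) of some point of A' (in fact strictly within, when d > 0). -/
lemma arc_aux_ident (r m ψ α a b : ℝ) (hab : a + b = 1)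
    (hba : Real.sin m * (b - a) = Real.sin ψ) :
    (r*Real.cos (α+ψ) - a*(r*Real.cos (α-m)) - b*(r*Real.cos (α+m)))^2 +
    (r*Real.sin (α+ψ) - a*(r*Real.sin (α-m)) - b*(r*Real.sin (α+m)))^2
      = (r*(Real.cos ψ - Real.cos m))^2 := by
  obtain rfl : b = 1 - a := by linarith
  rw [Real.cos_add α ψ, Real.cos_add α m, Real.cos_sub α m,
      Real.sin_add α ψ, Real.sin_add α m, Real.sin_sub α m, ← hba]
  linear_combination (r*(Real.cos ψ - Real.cos m))^2 * Real.sin_sq_add_cos_sq α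

lemma arc_aux_small (r m ψ α : ℝ) (hr : 0 < r) (hm0 : 0 < m) (hm : m ≤ Real.pi/2)
    (hψ1 : -m ≤ ψ) (hψ2 : ψ ≤ m) :
    ∃ a b : ℝ, 0 ≤ a ∧ 0 ≤ b ∧ a + b = 1 ∧
    (r*Real.cos (α+ψ) - a*(r*Real.cos (α-m)) - b*(r*Real.cos (α+m)))^2 +
    (r*Real.sin (α+ψ) - a*(r*Real.sin (α-m)) - b*(r*Real.sin (α+m)))^2
      < (r*m^2/2)^2 := by
  have hπ := Real.pi_pos
  have hsm : 0 < Real.sin m := Real.sin_pos_of_pos_of_lt_pi hm0 (by linarith)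
  have hle : Real.sin ψ ≤ Real.sin m :=
    Real.sin_le_sin_of_le_of_le_pi_div_two (by linarith) hm hψ2
  have hge : -Real.sin m ≤ Real.sin ψ := by
    have := Real.sin_le_sin_of_le_of_le_pi_div_two (x := -m) (y := ψ)
      (by linarith) (by linarith) hψ1
    rwa [Real.sin_neg] at this
  refine ⟨(Real.sin m - Real.sin ψ)/(2*Real.sin m), (Real.sin m + Real.sin ψ)/(2*Real.sin m),
    div_nonneg (by linarith) (by linarith), div_nonneg (by linarith) (by linarith),
    by field_simp; ring, ?_⟩
  rw [arc_aux_ident r m ψ α _ _ (by field_simp; ring) (by field_simp; ring)]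
  have e1 : Real.cos ψ = Real.cos ((m+ψ)/2) * Real.cos ((m-ψ)/2)
      + Real.sin ((m+ψ)/2) * Real.sin ((m-ψ)/2) := by
    rw [← Real.cos_sub]; ring_nf
  have e2 : Real.cos m = Real.cos ((m+ψ)/2) * Real.cos ((m-ψ)/2)
      - Real.sin ((m+ψ)/2) * Real.sin ((m-ψ)/2) := by
    rw [← Real.cos_add]; ring_nf
  set u := (m+ψ)/2 with hu'
  set v := (m-ψ)/2 with hv'
  have hu : 0 ≤ u := by rw [hu']; linarith
  have hv : 0 ≤ v := by rw [hv']; linarith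
  have huv : u + v = m := by rw [hu', hv']; ring
  have hsu : 0 ≤ Real.sin u := Real.sin_nonneg_of_nonneg_of_le_pi hu (by linarith)
  have hsv : 0 ≤ Real.sin v := Real.sin_nonneg_of_nonneg_of_le_pi hv (by linarith)
  have hid : Real.cos ψ - Real.cos m = 2 * Real.sin u * Real.sin v := by
    rw [e1, e2]; ring
  rw [hid]
  have hkey : 2 * Real.sin u * Real.sin v < m^2/2 := by
    rcases eq_or_lt_of_le hu with h|h
    · rw [← h]; simp; positivity
    · rcases eq_or_lt_of_le hv with h'|h'
      · rw [← h']; simp; positivity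
      · have p1 : Real.sin u * Real.sin v ≤ u * Real.sin v :=
          mul_le_mul_of_nonneg_right (Real.sin_lt h).le hsv
        have p2 : u * Real.sin v < u * v := mul_lt_mul_of_pos_left (Real.sin_lt h') h
        nlinarith [p1, p2, sq_nonneg (u - v)]
  have hX : 0 ≤ 2 * Real.sin u * Real.sin v := by positivity
  have hsq : (2 * Real.sin u * Real.sin v)^2 < (m^2/2)^2 := by nlinarith [hkey, hX]
  have hfin := mul_lt_mul_of_pos_left hsq (mul_pos hr hr)
  linear_combination hfin

lemma arc_aux_big (r m ψ α : ℝ) (hr : 0 < r) (hm : Real.pi/2 ≤ m) :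
    (r*Real.cos (α+ψ) - (1/2)*(r*Real.cos (α-m)) - (1/2)*(r*Real.cos (α+m)))^2 +
    (r*Real.sin (α+ψ) - (1/2)*(r*Real.sin (α-m)) - (1/2)*(r*Real.sin (α+m)))^2
      < (r*m^2/2)^2 := by
  have hπ := Real.pi_pos
  have heq : (r*Real.cos (α+ψ) - (1/2)*(r*Real.cos (α-m)) - (1/2)*(r*Real.cos (α+m)))^2 +
      (r*Real.sin (α+ψ) - (1/2)*(r*Real.sin (α-m)) - (1/2)*(r*Real.sin (α+m)))^2
      = r^2 * (1 + (Real.cos m)^2 - 2*Real.cos m*Real.cos ψ) := by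
    rw [Real.cos_add α ψ, Real.cos_add α m, Real.cos_sub α m,
        Real.sin_add α ψ, Real.sin_add α m, Real.sin_sub α m]
    linear_combination (r^2*((Real.cos ψ - Real.cos m)^2 + (Real.sin ψ)^2)) *
        Real.sin_sq_add_cos_sq α + r^2 * Real.sin_sq_add_cos_sq ψ
  rw [heq]
  have hr2 : 0 < r^2 := by positivity
  rcases le_or_gt m (Real.pi + Real.pi/2) with hcase | hcase
  · have hcm : Real.cos m ≤ 0 := Real.cos_nonpos_of_pi_div_two_le_of_le hm hcase
    have h1 : 1 - m^2/2 < Real.cos m :=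
      Real.one_sub_sq_div_two_lt_cos (ne_of_gt (by linarith : (0:ℝ) < m))
    have hb : 1 + (Real.cos m)^2 - 2*Real.cos m*Real.cos ψ ≤ (1 - Real.cos m)^2 := by
      nlinarith [Real.cos_le_one ψ, hcm]
    have hb2 : (1 - Real.cos m)^2 < (m^2/2)^2 := by
      nlinarith [h1, hcm, sq_nonneg m]
    have k1 := mul_le_mul_of_nonneg_left hb hr2.le
    have k2 := mul_lt_mul_of_pos_left hb2 hr2
    linear_combination lt_of_le_of_lt k1 k2
  · have hb : 1 + (Real.cos m)^2 - 2*Real.cos m*Real.cos ψ ≤ 4 := by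
      nlinarith [sq_nonneg (Real.cos m + Real.cos ψ), Real.neg_one_le_cos ψ,
        Real.cos_le_one ψ, Real.neg_one_le_cos m, Real.cos_le_one m]
    have hm4 : 4 < m^2/2 := by nlinarith [Real.pi_gt_three, hcase]
    have hb2 : (4:ℝ) < (m^2/2)^2 := by nlinarith [hm4]
    have k1 := mul_le_mul_of_nonneg_left hb hr2.le
    have k2 := mul_lt_mul_of_pos_left hb2 hr2
    linear_combination lt_of_le_of_lt k1 k2

/-- Every point of a circular arc of arc length d on a circle of radius r lies
within d²/(8r) of the chord joining the endpoints of the arc (strictly within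
when d > 0). -/
theorem arc_close_to_chord (c : EuclideanSpace ℝ (Fin 2)) (r : ℝ) (hr : 0 < r)
    (θ₀ d : ℝ) (hd : 0 ≤ d)
    (pt : ℝ → EuclideanSpace ℝ (Fin 2))
    (hpt : ∀ θ, pt θ = ![c 0 + r * Real.cos θ, c 1 + r * Real.sin θ]) :
    ∀ θ ∈ Set.Icc θ₀ (θ₀ + d / r),
      Metric.infDist (pt θ) (segment ℝ (pt θ₀) (pt (θ₀ + d / r))) ≤ d ^ 2 / (8 * r) ∧
      (0 < d → Metric.infDist (pt θ) (segment ℝ (pt θ₀) (pt (θ₀ + d / r))) < d ^ 2 / (8 * r)) := by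
  intro θ hθ
  obtain ⟨hθ1, hθ2⟩ := hθ
  have key : ∀ a b : ℝ, 0 ≤ a → 0 ≤ b → a + b = 1 →
      Metric.infDist (pt θ) (segment ℝ (pt θ₀) (pt (θ₀ + d / r))) ≤
      Real.sqrt ((r*Real.cos θ - a*(r*Real.cos θ₀) - b*(r*Real.cos (θ₀+d/r)))^2 +
                 (r*Real.sin θ - a*(r*Real.sin θ₀) - b*(r*Real.sin (θ₀+d/r)))^2) := by
    intro a b ha hb hab
    have hmem : a • pt θ₀ + b • pt (θ₀ + d/r) ∈ segment ℝ (pt θ₀) (pt (θ₀+d/r)) :=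
      ⟨a, b, ha, hb, hab, rfl⟩
    refine (Metric.infDist_le_dist_of_mem hmem).trans (le_of_eq ?_)
    rw [EuclideanSpace.dist_eq]
    obtain rfl : b = 1 - a := by linarith
    congr 1
    simp only [hpt, Fin.sum_univ_two, Real.dist_eq, sq_abs, PiLp.add_apply, PiLp.smul_apply,
      smul_eq_mul, Matrix.cons_val_zero, Matrix.cons_val_one, Matrix.head_cons]
    ring
  rcases hd.eq_or_lt with hd0 | hdpos
  · -- d = 0
    have h0 : θ = θ₀ := le_antisymm (by simpa [← hd0] using hθ2) hθ1
    have hz : Metric.infDist (pt θ) (segment ℝ (pt θ₀) (pt (θ₀ + d / r))) ≤ 0 := by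
      rw [h0]
      calc Metric.infDist (pt θ₀) (segment ℝ (pt θ₀) (pt (θ₀ + d / r)))
          ≤ dist (pt θ₀) (pt θ₀) := Metric.infDist_le_dist_of_mem (left_mem_segment ℝ _ _)
        _ = 0 := dist_self _
    have hzero : d ^ 2 / (8 * r) = 0 := by rw [← hd0]; norm_num
    refine ⟨by rw [hzero]; exact hz, ?_⟩
    intro h
    rw [← hd0] at h
    exact absurd h (lt_irrefl 0)
  · have hδ : 0 < d / r := div_pos hdpos hr
    set m := d / r / 2 with hm'
    have h2m : d / r = 2 * m := by rw [hm']; ring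
    have hm0 : 0 < m := by positivity
    have hBe : r * m^2/2 = d^2/(8*r) := by
      rw [hm']
      field_simp
      ring
    have hBpos : 0 < r * m^2/2 := by positivity
    have hmain : Metric.infDist (pt θ) (segment ℝ (pt θ₀) (pt (θ₀ + d / r)))
        < d ^ 2 / (8 * r) := by
      rcases le_or_gt (d/r) Real.pi with hsmall | hbig
      · obtain ⟨a, b, ha, hb, hab, hlt⟩ :=
          arc_aux_small r m (θ - (θ₀ + m)) (θ₀ + m) hr hm0 (by linarith)
            (by linarith) (by linarith [h2m])
        rw [show θ₀ + m + (θ - (θ₀ + m)) = θ by ring, show θ₀ + m - m = θ₀ by ring,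
            show θ₀ + m + m = θ₀ + d / r by rw [h2m]; ring] at hlt
        refine lt_of_le_of_lt (key a b ha hb hab) ?_
        rw [← hBe]
        exact (Real.sqrt_lt' hBpos).2 hlt
      · have hlt := arc_aux_big r m (θ - (θ₀ + m)) (θ₀ + m) hr (by linarith)
        rw [show θ₀ + m + (θ - (θ₀ + m)) = θ by ring, show θ₀ + m - m = θ₀ by ring,
            show θ₀ + m + m = θ₀ + d / r by rw [h2m]; ring] at hlt
        refine lt_of_le_of_lt (key (1/2) (1/2) (by norm_num) (by norm_num) (by norm_num)) ?_
        rw [← hBe]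
        exact (Real.sqrt_lt' hBpos).2 hlt
    exact ⟨hmain.le, fun _ => hmain⟩
end

section
/- Define ψ(x,y,r) = ((1+r²+2rx+x²+y²)(1+r²+2ry+x²+y²)) / ((1+x²+y²)(1+2r²+x²+y²+2rx+2ry)). For all x,y ≥ 0 and r ∈ (0,1], ψ(x,y,r) ≤ 3/2, with the maximum value 3/2 attained at r = 1 and x = y = (√3 − 1)/2. -/
/-- ψ(x,y,r) = ((1+r²+2rx+x²+y²)(1+r²+2ry+x²+y²)) /
((1+x²+y²)(1+2r²+x²+y²+2rx+2ry)) is at most 3/2 for x,y ≥ 0 and r ∈ (0,1],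
with the maximum 3/2 attained at r = 1, x = y = (√3−1)/2. -/
theorem psi_le_three_halves
    (ψ : ℝ → ℝ → ℝ → ℝ)
    (hψ : ∀ x y r, ψ x y r =
      ((1 + r ^ 2 + 2 * r * x + x ^ 2 + y ^ 2) * (1 + r ^ 2 + 2 * r * y + x ^ 2 + y ^ 2)) /
        ((1 + x ^ 2 + y ^ 2) * (1 + 2 * r ^ 2 + x ^ 2 + y ^ 2 + 2 * r * x + 2 * r * y))) :
    (∀ x y r : ℝ, 0 ≤ x → 0 ≤ y → r ∈ Set.Ioc (0:ℝ) 1 → ψ x y r ≤ 3 / 2) ∧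
      ψ ((Real.sqrt 3 - 1) / 2) ((Real.sqrt 3 - 1) / 2) 1 = 3 / 2 := by
  constructor
  · intro x y r hx hy hr
    obtain ⟨hr0, hr1⟩ := hr
    rw [hψ]
    have hD : 0 < (1 + x ^ 2 + y ^ 2) * (1 + 2 * r ^ 2 + x ^ 2 + y ^ 2 + 2 * r * x + 2 * r * y) := by
      positivity
    rw [div_le_div_iff₀ hD (by norm_num)]
    have h1 : 0 ≤ (x ^ 2 + y ^ 2 + r * x + r * y - r ^ 2) ^ 2 := sq_nonneg _
    have h2 : 0 ≤ (r * (x - y)) ^ 2 := sq_nonneg _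
    have h3 : 0 ≤ (1 - r ^ 2) * (1 + 3 * r ^ 2 + 2 * r * x + 2 * r * y + 2 * x ^ 2 + 2 * y ^ 2) := by
      apply mul_nonneg
      · nlinarith
      · positivity
    nlinarith [h1, h2, h3]
  · rw [hψ]
    have h3 : Real.sqrt 3 ^ 2 = 3 := Real.sq_sqrt (by norm_num)
    rw [div_eq_div_iff] <;> nlinarith [Real.sqrt_nonneg 3]
end

section
/- The polynomial N(x,y) = 1 − 2x + 4x² + 2x³ + x⁴ − 2y − 8xy + 2x²y + 4y² + 2xy² + 2x²y² + 2y³ + y⁴ is non-negative on all of ℝ². -/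
/-- The polynomial N(x,y) is non-negative on all of ℝ². -/
theorem poly_N_nonneg (x y : ℝ) :
    0 ≤ 1 - 2 * x + 4 * x ^ 2 + 2 * x ^ 3 + x ^ 4 - 2 * y - 8 * x * y + 2 * x ^ 2 * y
        + 4 * y ^ 2 + 2 * x * y ^ 2 + 2 * x ^ 2 * y ^ 2 + 2 * y ^ 3 + y ^ 4 := by
  set s := Real.sqrt 3 with hs
  have h3 : s ^ 2 = 3 := Real.sq_sqrt (by norm_num)
  set u := x - (s - 1) / 2 with hu
  set v := y - (s - 1) / 2 with hv
  have key : 1 - 2 * x + 4 * x ^ 2 + 2 * x ^ 3 + x ^ 4 - 2 * y - 8 * x * y + 2 * x ^ 2 * y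
        + 4 * y ^ 2 + 2 * x * y ^ 2 + 2 * x ^ 2 * y ^ 2 + 2 * y ^ 3 + y ^ 4
      = (u ^ 2 + v ^ 2 + s * (u + v)) ^ 2 + 5 * (u - v) ^ 2 := by
    rw [hu, hv]
    linear_combination (x ^ 2 + x + y ^ 2 + y - s ^ 2 / 4 - 1 / 4) * h3
  rw [key]
  positivity
end

section
/- For every x,y ≥ 0 and r > 0, the quantity ψ(x,y,r) = ((1+r²+2rx+x²+y²)(1+r²+2ry+x²+y²)) / ((1+x²+y²)(1+2r²+x²+y²+2rx+2ry)) is strictly increasing in r; in particular ∂ψ/∂r > 0. -/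
set_option maxHeartbeats 1000000


/-- For fixed x, y ≥ 0, the quantity ψ(x,y,r) is strictly increasing in r on (0,∞). -/
theorem psi_strictMono_in_r (x y : ℝ) (hx : 0 ≤ x) (hy : 0 ≤ y) :
    StrictMonoOn (fun r : ℝ =>
      ((1 + r ^ 2 + 2 * r * x + x ^ 2 + y ^ 2) * (1 + r ^ 2 + 2 * r * y + x ^ 2 + y ^ 2)) /
        ((1 + x ^ 2 + y ^ 2) * (1 + 2 * r ^ 2 + x ^ 2 + y ^ 2 + 2 * r * x + 2 * r * y)))
      (Set.Ioi 0) := by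
  intro a ha b hb hab
  simp only [Set.mem_Ioi] at ha hb
  have hDa : (0:ℝ) < (1 + x^2 + y^2) * (1 + 2*a^2 + x^2 + y^2 + 2*a*x + 2*a*y) := by positivity
  have hDb : (0:ℝ) < (1 + x^2 + y^2) * (1 + 2*b^2 + x^2 + y^2 + 2*b*x + 2*b*y) := by positivity
  have h1 : a < b := hab
  have h2 : a^2 < b^2 := by nlinarith
  have h3 : a^3 < b^3 := by nlinarith
  have h4 : a^4 < b^4 := by nlinarith
  have hxy : 0 ≤ x + y := by linarith
  have hab' : 0 < a * b := mul_pos ha hb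
  have t1 : 0 < (1+x^2+y^2) * (b^4 - a^4) :=
    mul_pos (by positivity) (sub_pos.mpr h4)
  have t2 : 0 ≤ (x+y) * ((1+x^2+y^2) * (b^3 - a^3)) :=
    mul_nonneg hxy (mul_nonneg (by positivity) (sub_pos.mpr h3).le)
  have t3 : 0 ≤ x*y * ((1+x^2+y^2) * (b^2 - a^2)) :=
    mul_nonneg (mul_nonneg hx hy) (mul_nonneg (by positivity) (sub_pos.mpr h2).le)
  have t4 : 0 ≤ x*y * ((x+y) * (a*b*(b - a))) :=
    mul_nonneg (mul_nonneg hx hy) (mul_nonneg hxy (mul_nonneg hab'.le (sub_pos.mpr h1).le))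
  have t5 : 0 ≤ (x+y)^2 * (a*b*(b^2 - a^2)) :=
    mul_nonneg (sq_nonneg _) (mul_nonneg hab'.le (sub_pos.mpr h2).le)
  have t6 : 0 ≤ (x+y) * (a*b*(b^3 - a^3)) :=
    mul_nonneg hxy (mul_nonneg hab'.le (sub_pos.mpr h3).le)
  have t7 : 0 ≤ (x+y) * (a^2*b^2*(b - a)) :=
    mul_nonneg hxy (mul_nonneg (by positivity) (sub_pos.mpr h1).le)
  have t8 : 0 ≤ a^2*b^2*(b^2 - a^2) :=
    mul_nonneg (by positivity) (sub_pos.mpr h2).le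
  have hc : (0:ℝ) < 1 + x^2 + y^2 := by positivity
  have key : (1 + a ^ 2 + 2 * a * x + x ^ 2 + y ^ 2) * (1 + a ^ 2 + 2 * a * y + x ^ 2 + y ^ 2) *
      (1 + 2 * b ^ 2 + x ^ 2 + y ^ 2 + 2 * b * x + 2 * b * y) <
      (1 + b ^ 2 + 2 * b * x + x ^ 2 + y ^ 2) * (1 + b ^ 2 + 2 * b * y + x ^ 2 + y ^ 2) *
      (1 + 2 * a ^ 2 + x ^ 2 + y ^ 2 + 2 * a * x + 2 * a * y) := by
    linarith [t1, t2, t3, t4, t5, t6, t7, t8]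
  simp only
  rw [div_lt_div_iff₀ hDa hDb]
  linarith [mul_lt_mul_of_pos_left key hc]
end

section
/- Let p₁, p₂ ∈ S² be points at distance D = ‖p₁−p₂‖ and let q₁, q₂ ∈ S² be points on the great circle through p₁, p₂ with q_j at arc-length distance δ_j from p_j, moving toward each other, with δ = (δ₁+δ₂)/2. Then ‖q₁−q₂‖ ≥ D cos(δ) − √(4−D²)·sin(δ) ≥ D(1−δ²/2) − √(4−D²)·δ. -/
/-- Separation estimate on a great circle of the unit sphere: if p₁, p₂ are at
arc distance Δ (so chord distance D = 2 sin(Δ/2)), and q₁, q₂ lie on the same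
great circle at arc distances δ₁, δ₂ from p₁, p₂ respectively, moving toward
each other (so the arc from q₁ to q₂ has length Δ − δ₁ − δ₂ ≥ 0), then with
δ = (δ₁ + δ₂)/2, the chord distance ‖q₁ − q₂‖ = 2 sin((Δ − 2δ)/2) satisfies
‖q₁−q₂‖ ≥ D cos δ − √(4−D²) sin δ ≥ D(1−δ²/2) − √(4−D²)·δ. -/
theorem great_circle_separation (Δ δ₁ δ₂ : ℝ) (h1 : 0 ≤ δ₁) (h2 : 0 ≤ δ₂)
    (h3 : δ₁ + δ₂ ≤ Δ) (hπ : Δ ≤ Real.pi) :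
    2 * Real.sin ((Δ - (δ₁ + δ₂)) / 2) ≥
        (2 * Real.sin (Δ / 2)) * Real.cos ((δ₁ + δ₂) / 2)
          - Real.sqrt (4 - (2 * Real.sin (Δ / 2)) ^ 2) * Real.sin ((δ₁ + δ₂) / 2) ∧
      (2 * Real.sin (Δ / 2)) * Real.cos ((δ₁ + δ₂) / 2)
          - Real.sqrt (4 - (2 * Real.sin (Δ / 2)) ^ 2) * Real.sin ((δ₁ + δ₂) / 2) ≥
        (2 * Real.sin (Δ / 2)) * (1 - ((δ₁ + δ₂) / 2) ^ 2 / 2)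
          - Real.sqrt (4 - (2 * Real.sin (Δ / 2)) ^ 2) * ((δ₁ + δ₂) / 2) := by
  have hδ : 0 ≤ δ₁ + δ₂ := add_nonneg h1 h2
  have hΔ : 0 ≤ Δ := le_trans hδ h3
  have hhalf : Δ / 2 ≤ Real.pi / 2 := by linarith
  have hcos : 0 ≤ Real.cos (Δ / 2) := Real.cos_nonneg_of_mem_Icc ⟨by linarith [Real.pi_pos], hhalf⟩
  have hsin : 0 ≤ Real.sin (Δ / 2) := Real.sin_nonneg_of_nonneg_of_le_pi (by linarith)
    (by linarith [Real.pi_pos])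
  have hsqrt : Real.sqrt (4 - (2 * Real.sin (Δ / 2)) ^ 2) = 2 * Real.cos (Δ / 2) := by
    have : 4 - (2 * Real.sin (Δ / 2)) ^ 2 = (2 * Real.cos (Δ / 2)) ^ 2 := by
      ring_nf; nlinarith [Real.sin_sq_add_cos_sq (Δ * (1/2))]
    rw [this, Real.sqrt_sq (by linarith)]
  constructor
  · rw [hsqrt]
    have : (Δ - (δ₁ + δ₂)) / 2 = Δ / 2 - (δ₁ + δ₂) / 2 := by ring
    rw [this, Real.sin_sub]
    ring_nf
    nlinarith [Real.sin_sq_add_cos_sq (Δ / 2)]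
  · rw [hsqrt]
    have hc : 1 - ((δ₁ + δ₂) / 2) ^ 2 / 2 ≤ Real.cos ((δ₁ + δ₂) / 2) :=
      Real.one_sub_sq_div_two_le_cos
    have hs : Real.sin ((δ₁ + δ₂) / 2) ≤ (δ₁ + δ₂) / 2 := Real.sin_le (by linarith)
    nlinarith
end
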